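/- Let q = 2^n. Then the number of triples (a,b,c) in F_q^3 with c^4 - a*b*c^3 + (a^2+b^2-3)*c^2 - a*b*c + 1 = 0 equals q^2 + 2 if n is even, and q^2 - 2q + 2 if n is odd. -/

import Mathlib

open Finset

section aux
variable {F : Type} [Field F] [Fintype F] [DecidableEq F]

-- count of pairs with product e ≠ 0
lemma card_mul_eq_of_ne_zero (e : F) (he : e ≠ 0) :
    Fintype.card {xy : F × F // xy.1 * xy.2 = e} = Fintype.card F - 1 := by
  have eqv : {xy : F × F // xy.1 * xy.2 = e} ≃ {x : F // ¬ (x = 0)} :=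
    { toFun := fun xy => ⟨xy.1.1, by
        intro h0
        apply he
        rw [← xy.2, h0, zero_mul]⟩
      invFun := fun x => ⟨(x.1, e / x.1), mul_div_cancel₀ e x.2⟩
      left_inv := fun xy => by
        rcases xy with ⟨⟨x, y⟩, h⟩
        have hx : x ≠ 0 := by
          intro h0; apply he; rw [← h, h0, zero_mul]
        ext
        · rfl
        · show e / x = y
          rw [eq_comm, eq_div_iff hx]
          linear_combination h
      right_inv := fun x => rfl }
  rw [Fintype.card_congr eqv, Fintype.card_subtype_compl, Fintype.card_subtype_eq]

lemma card_mul_eq_zero :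
    Fintype.card {xy : F × F // xy.1 * xy.2 = 0} = 2 * Fintype.card F - 1 := by
  have h1 : Fintype.card {xy : F × F // xy.1 * xy.2 = 0}
      = Fintype.card {xy : F × F // ¬ (¬ xy.1 = 0 ∧ ¬ xy.2 = 0)} := by
    apply Fintype.card_congr
    apply Equiv.subtypeEquivRight
    intro xy
    rw [mul_eq_zero]
    tauto
  have h2 : Fintype.card {xy : F × F // ¬ xy.1 = 0 ∧ ¬ xy.2 = 0}
      = (Fintype.card F - 1) * (Fintype.card F - 1) := by
    have e := Equiv.subtypeProdEquivProd (p := fun a : F => ¬ a = 0) (q := fun b : F => ¬ b = 0)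
    rw [Fintype.card_congr e, Fintype.card_prod,
      Fintype.card_subtype_compl, Fintype.card_subtype_eq]
  rw [h1, Fintype.card_subtype_compl, h2, Fintype.card_prod]
  have hq : 1 ≤ Fintype.card F := Fintype.card_pos
  obtain ⟨m, hm⟩ : ∃ m, Fintype.card F = m + 1 := ⟨_, (Nat.succ_pred_eq_of_pos hq).symm⟩
  rw [hm]
  simp only [Nat.add_sub_cancel]
  have : (m + 1) * (m + 1) = m * m + (2 * (m+1) - 1) := by
    rw [show 2 * (m+1) - 1 = 2*m + 1 from by omega]; ring
  omega

-- the key char-2 factorization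
lemma key_iff (h2 : (2:F) = 0) (a b c : F) :
    c^4 - a*b*c^3 + (a^2+b^2-3)*c^2 - a*b*c + 1 = 0 ↔
      (c*a + b) * (c*a + c^2*b) = (c^2 + c + 1)^2 := by
  constructor <;> intro h
  · linear_combination -h + (-(a*b*c^3) - a*b*c - c^3 - 3*c^2 - c
      + c*a*b + c^2*a^2 + c^2*b^2 + c^3*a*b) * h2
  · linear_combination h + (a*b*c^3 + a*b*c + c^3 + 3*c^2 + c
      + (1 - 2*c*a*b - 3*c^2 - 2*c^3*a*b + c^4)) * h2

lemma card_sum_eq_one :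
    Fintype.card {ab : F × F // ab.1 + ab.2 = 1} = Fintype.card F := by
  have eqv : {ab : F × F // ab.1 + ab.2 = 1} ≃ F :=
    { toFun := fun ab => ab.1.1
      invFun := fun a => ⟨(a, 1 - a), by ring⟩
      left_inv := fun ab => by
        rcases ab with ⟨⟨a, b⟩, h⟩
        ext
        · rfl
        · show 1 - a = b
          linear_combination -h
      right_inv := fun a => rfl }
  exact Fintype.card_congr eqv

lemma card_fiber_general (h2 : (2:F) = 0) (c : F) (hc0 : c ≠ 0) (hc1 : c ≠ 1) :
    Fintype.card {ab : F × F //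
      (c*ab.1 + ab.2) * (c*ab.1 + c^2*ab.2) = (c^2 + c + 1)^2}
    = Fintype.card {xy : F × F // xy.1 * xy.2 = (c^2 + c + 1)^2} := by
  have hd : c^2 - 1 ≠ 0 := by
    have hsq : c^2 - 1 = (c - 1)^2 := by linear_combination (c - 1) * h2
    rw [hsq]
    exact pow_ne_zero _ (sub_ne_zero.mpr hc1)
  let φ : (F × F) ≃ (F × F) :=
    { toFun := fun ab => (c*ab.1 + ab.2, c*ab.1 + c^2*ab.2)
      invFun := fun xy =>
        ((xy.1 - (xy.2 - xy.1)/(c^2 - 1))/c, (xy.2 - xy.1)/(c^2 - 1))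
      left_inv := fun ab => by
        ext
        · show (_ : F) = ab.1
          field_simp
          ring
        · show (_ : F) = ab.2
          field_simp
          ring
      right_inv := fun xy => by
        ext
        · show (_ : F) = xy.1
          field_simp
          ring
        · show (_ : F) = xy.2
          field_simp
          ring }
  exact Fintype.card_congr (Equiv.subtypeEquiv φ (fun ab => Iff.rfl))

lemma root_cubic (h2 : (2:F) = 0) {c : F} (hc : c^2 + c + 1 = 0) :
    c ≠ 0 ∧ c ≠ 1 ∧ c^3 = 1 := by
  refine ⟨?_, ?_, ?_⟩
  · rintro rfl
    simp at hc
  · rintro rfl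
    have : (1:F) = 0 := by linear_combination hc - h2
    exact one_ne_zero this
  · linear_combination (c - 1) * hc

lemma card_roots_of_dvd (h2 : (2:F) = 0) (h3 : (3:ℕ) ∣ Fintype.card F - 1) :
    (Finset.univ.filter fun c : F => c^2 + c + 1 = 0).card = 2 := by
  have : Fact (Nat.Prime 3) := ⟨by norm_num⟩
  have hcard : Fintype.card Fˣ = Fintype.card F - 1 := by
    rw [← Nat.card_eq_fintype_card, Nat.card_units, Nat.card_eq_fintype_card]
  obtain ⟨u, hu⟩ := exists_prime_orderOf_dvd_card (G := Fˣ) 3 (by rw [hcard]; exact h3)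
  obtain ⟨ω, hω⟩ : ∃ ω : F, ω = (u : F) := ⟨_, rfl⟩
  have hu3 : ω^3 = 1 := by
    have h : u^3 = 1 := by rw [← hu]; exact pow_orderOf_eq_one u
    rw [hω]
    simpa using congrArg (Units.val) h
  have hune : ω ≠ 1 := by
    intro h
    have : u = 1 := Units.ext (by rw [← hω]; exact h)
    rw [this, orderOf_one] at hu
    norm_num at hu
  have hroot : ω^2 + ω + 1 = 0 := by
    have := mul_eq_zero.mp (show (ω - 1) * (ω^2 + ω + 1) = 0 by linear_combination hu3)
    rcases this with h | h
    · exact absurd (sub_eq_zero.mp h) hune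
    · exact h
  have hroot2 : (ω^2)^2 + ω^2 + 1 = 0 := by linear_combination hroot + ω * hu3
  have hne : ω^2 ≠ ω := by
    intro h
    have h1 : ω * (ω - 1) = 0 := by linear_combination h
    rcases mul_eq_zero.mp h1 with h' | h'
    · exact (root_cubic h2 hroot).1 h'
    · exact hune (sub_eq_zero.mp h')
  have hset : (Finset.univ.filter fun c : F => c^2 + c + 1 = 0) = {ω, ω^2} := by
    ext c
    simp only [Finset.mem_filter, Finset.mem_univ, true_and, Finset.mem_insert,
      Finset.mem_singleton]
    constructor
    · intro hc
      have hfac : (c - ω) * (c - ω^2) = 0 := by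
        linear_combination hc - c * hroot + hu3
      rcases mul_eq_zero.mp hfac with h | h
      · exact Or.inl (sub_eq_zero.mp h)
      · exact Or.inr (sub_eq_zero.mp h)
    · rintro (rfl | rfl)
      · exact hroot
      · exact hroot2
  rw [hset, Finset.card_insert_of_notMem (by simpa using hne.symm), Finset.card_singleton]

lemma card_roots_of_not_dvd (h2 : (2:F) = 0) (h3 : ¬ (3:ℕ) ∣ Fintype.card F - 1) :
    (Finset.univ.filter fun c : F => c^2 + c + 1 = 0).card = 0 := by
  rw [Finset.card_eq_zero, Finset.filter_eq_empty_iff]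
  intro c _ hc
  obtain ⟨hc0, hc1, hc3⟩ := root_cubic h2 hc
  have hu3 : (Units.mk0 c hc0)^3 = 1 := Units.ext (by simpa using hc3)
  have hdvd : orderOf (Units.mk0 c hc0) ∣ 3 := orderOf_dvd_of_pow_eq_one hu3
  have hne1 : orderOf (Units.mk0 c hc0) ≠ 1 := by
    intro h
    rw [orderOf_eq_one_iff] at h
    exact hc1 (by simpa using congrArg Units.val h)
  have h3' : orderOf (Units.mk0 c hc0) = 3 := by
    rcases (Nat.dvd_prime (by norm_num)).mp hdvd with h | h
    · exact absurd h hne1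
    · exact h
  have := orderOf_dvd_card (x := Units.mk0 c hc0)
  rw [← Nat.card_eq_fintype_card, Nat.card_units, Nat.card_eq_fintype_card, h3'] at this
  exact h3 this

end aux

lemma pow_two_mod_three (n : ℕ) : 2^n % 3 = if Even n then 1 else 2 := by
  induction n with
  | zero => simp
  | succ m ih =>
    rw [pow_succ, Nat.mul_mod, ih]
    rcases Nat.even_or_odd m with h | h
    · have h1 : ¬ Even (m + 1) := by simp [Nat.even_add_one, h]
      simp [h, h1]
    · have h1 : Even (m + 1) := by simpa [Nat.even_add_one] using Nat.not_even_iff_odd.mpr h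
      simp [Nat.not_even_iff_odd.mpr h, h1]

theorem stmt_11 (n : ℕ) (hn : 0 < n)
    (F : Type) [Field F] [Fintype F] (hF : Fintype.card F = 2 ^ n) :
    Nat.card {v : F × F × F //
      v.2.2 ^ 4 - v.1 * v.2.1 * v.2.2 ^ 3 + (v.1 ^ 2 + v.2.1 ^ 2 - 3) * v.2.2 ^ 2
        - v.1 * v.2.1 * v.2.2 + 1 = 0} =
      if Even n then (2 ^ n) ^ 2 + 2 else (2 ^ n) ^ 2 - 2 * 2 ^ n + 2 := by
  classical
  have h2 : (2 : F) = 0 := by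
    have h := Nat.cast_card_eq_zero F
    rw [hF] at h
    push_cast at h
    exact pow_eq_zero_iff hn.ne' |>.mp h
  -- decompose over the last coordinate
  have E : {v : F × F × F //
      v.2.2 ^ 4 - v.1 * v.2.1 * v.2.2 ^ 3 + (v.1 ^ 2 + v.2.1 ^ 2 - 3) * v.2.2 ^ 2
        - v.1 * v.2.1 * v.2.2 + 1 = 0} ≃
      (Σ c : F, {ab : F × F //
        c ^ 4 - ab.1 * ab.2 * c ^ 3 + (ab.1 ^ 2 + ab.2 ^ 2 - 3) * c ^ 2
          - ab.1 * ab.2 * c + 1 = 0}) :=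
    { toFun := fun v => ⟨v.1.2.2, ⟨(v.1.1, v.1.2.1), v.2⟩⟩
      invFun := fun s => ⟨(s.2.1.1, s.2.1.2, s.1), s.2.2⟩
      left_inv := fun v => rfl
      right_inv := fun s => rfl }
  rw [Nat.card_eq_fintype_card, Fintype.card_congr E, Fintype.card_sigma]
  set q := Fintype.card F with hq
  set g : F → ℕ := fun c => Fintype.card {ab : F × F //
        c ^ 4 - ab.1 * ab.2 * c ^ 3 + (ab.1 ^ 2 + ab.2 ^ 2 - 3) * c ^ 2
          - ab.1 * ab.2 * c + 1 = 0} with hg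
  have hq2 : 2 ≤ q := by rw [hF]; exact Nat.one_lt_two_pow_iff.mpr hn.ne'
  -- value at 0
  have hg0 : g 0 = 0 := by
    rw [hg]
    beta_reduce
    refine Fintype.card_eq_zero_iff.mpr ⟨fun x => ?_⟩
    exact one_ne_zero (α := F) (by linear_combination x.2)
  -- value at 1
  have hg1 : g 1 = q := by
    rw [hg]
    beta_reduce
    have e1 : ∀ ab : F × F,
        ((1:F) ^ 4 - ab.1 * ab.2 * 1 ^ 3 + (ab.1 ^ 2 + ab.2 ^ 2 - 3) * 1 ^ 2
          - ab.1 * ab.2 * 1 + 1 = 0) ↔ ab.1 + ab.2 = 1 := by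
      intro ab
      constructor <;> intro h
      · have hz : (ab.1 + ab.2 - 1)^2 = 0 := by
          linear_combination h + (2*ab.1*ab.2 - ab.1 - ab.2 + 1) * h2
        exact sub_eq_zero.mp (pow_eq_zero_iff (two_ne_zero) |>.mp hz)
      · linear_combination (ab.1 + ab.2 + 1) * h - 2 * ab.1 * ab.2 * h2
    rw [Fintype.card_congr (Equiv.subtypeEquivRight e1)]
    exact card_sum_eq_one
  -- value elsewhere
  have hgen : ∀ c : F, c ≠ 0 → c ≠ 1 →
      g c = (q - 1) + (if c^2 + c + 1 = 0 then q else 0) := by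
    intro c hc0 hc1
    rw [hg]
    beta_reduce
    have e1 : ∀ ab : F × F,
        (c ^ 4 - ab.1 * ab.2 * c ^ 3 + (ab.1 ^ 2 + ab.2 ^ 2 - 3) * c ^ 2
          - ab.1 * ab.2 * c + 1 = 0) ↔
        (c*ab.1 + ab.2) * (c*ab.1 + c^2*ab.2) = (c^2 + c + 1)^2 :=
      fun ab => key_iff h2 ab.1 ab.2 c
    rw [Fintype.card_congr (Equiv.subtypeEquivRight e1), card_fiber_general h2 c hc0 hc1]
    by_cases hroot : c^2 + c + 1 = 0
    · have hz : ((c^2+c+1)^2 : F) = 0 := by rw [hroot]; ring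
      have e2 : ∀ xy : F × F, (xy.1 * xy.2 = (c^2+c+1)^2) ↔ xy.1 * xy.2 = 0 := by
        intro xy; rw [hz]
      have hc' : Fintype.card {xy : F × F // xy.1 * xy.2 = 0} = 2 * Fintype.card F - 1 := by
        convert card_mul_eq_zero (F := F)
      rw [Fintype.card_congr (Equiv.subtypeEquivRight e2), hc', if_pos hroot]
      omega
    · have hz : ((c^2+c+1)^2 : F) ≠ 0 := pow_ne_zero _ hroot
      rw [card_mul_eq_of_ne_zero _ hz, if_neg hroot]
      omega
  -- sum it up
  have h0mem : (0:F) ∈ Finset.univ.erase (1:F) := by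
    simp [Finset.mem_erase]
  rw [← Finset.add_sum_erase _ g (Finset.mem_univ (1:F)), hg1,
    ← Finset.add_sum_erase _ g h0mem, hg0]
  set T : Finset F := (Finset.univ.erase (1:F)).erase (0:F) with hT
  have hTmem : ∀ c ∈ T, c ≠ 0 ∧ c ≠ 1 := by
    intro c hc
    rw [hT, Finset.mem_erase, Finset.mem_erase] at hc
    exact ⟨hc.1, hc.2.1⟩
  have hTcard : T.card = q - 2 := by
    rw [hT, Finset.card_erase_of_mem h0mem, Finset.card_erase_of_mem (Finset.mem_univ _),
      Finset.card_univ, ← hq]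
    omega
  have hsumT : ∑ c ∈ T, g c
      = (q - 2) * (q - 1) + q * (Finset.univ.filter fun c : F => c^2 + c + 1 = 0).card := by
    rw [Finset.sum_congr rfl (fun c hc => hgen c (hTmem c hc).1 (hTmem c hc).2),
      Finset.sum_add_distrib, Finset.sum_const, hTcard, smul_eq_mul]
    congr 1
    rw [← Finset.sum_filter]
    have hTfil : T.filter (fun c : F => c^2 + c + 1 = 0)
        = Finset.univ.filter (fun c : F => c^2 + c + 1 = 0) := by
      ext c
      simp only [hT, Finset.mem_filter, Finset.mem_erase, Finset.mem_univ, true_and, and_true]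
      constructor
      · exact fun h => h.2
      · intro hc
        obtain ⟨h0, h1, -⟩ := root_cubic h2 hc
        exact ⟨⟨h0, h1⟩, hc⟩
    rw [hTfil, Finset.sum_const, smul_eq_mul, mul_comm]
  rw [hsumT]
  have h2n : 2 ≤ 2^n := by rw [← hF]; exact hq2
  have hmod := pow_two_mod_three n
  have hqz : (q : ℤ) = 2^n := by exact_mod_cast hF
  rcases Nat.even_or_odd n with hpar | hpar
  · rw [if_pos hpar]
    have h3 : (3:ℕ) ∣ Fintype.card F - 1 := by
      rw [if_pos hpar] at hmod
      rw [← hq, hF] at *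
      omega
    rw [card_roots_of_dvd h2 h3]
    zify [hq2, show 1 ≤ q from by omega]
    rw [hqz]
    ring
  · rw [if_neg (Nat.not_even_iff_odd.mpr hpar)]
    have h3 : ¬ (3:ℕ) ∣ Fintype.card F - 1 := by
      rw [if_neg (Nat.not_even_iff_odd.mpr hpar)] at hmod
      rw [← hq, hF] at *
      omega
    rw [card_roots_of_not_dvd h2 h3]
    have hb : 2 * 2^n ≤ (2^n)^2 := by nlinarith [h2n]
    zify [hq2, show 1 ≤ q from by omega, hb]
    rw [hqz]
    ring
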